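/- Let N₁ and N₂ be subspaces of a finite-dimensional vector space. For nonnegative integers R₁, R₂, one can select R₁ vectors from N₁ and R₂ vectors from N₂ such that all R₁ + R₂ selected vectors are linearly independent if and only if R₁ ≤ dim N₁, R₂ ≤ dim N₂, and R₁ + R₂ ≤ dim(N₁ + N₂). -/

import Mathlib

open Set Submodule Module

section Helpers
variable {F V : Type*} [Field F] [AddCommGroup V] [Module F V]

lemma aux_disjoint_span {s t₁ t₂ : Set V}
    (hs : LinearIndependent F ((↑) : s → V)) (h₁ : t₁ ⊆ s) (h₂ : t₂ ⊆ s)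
    (h : Disjoint t₁ t₂) :
    Disjoint (span F t₁) (span F t₂) := by
  have key := hs.disjoint_span_image
    (s := (Subtype.val ⁻¹' t₁ : Set s)) (t := (Subtype.val ⁻¹' t₂ : Set s))
    (h.preimage _)
  have e₁ : (Subtype.val '' (Subtype.val ⁻¹' t₁ : Set s)) = t₁ := by
    rw [Subtype.image_preimage_coe, inter_eq_right.2 h₁]
  have e₂ : (Subtype.val '' (Subtype.val ⁻¹' t₂ : Set s)) = t₂ := by
    rw [Subtype.image_preimage_coe, inter_eq_right.2 h₂]
  rwa [e₁, e₂] at key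

end Helpers


/-- One can select `R₁` vectors from `N₁` and `R₂` vectors
from `N₂` so that all `R₁ + R₂` vectors are linearly independent iff
`R₁ ≤ dim N₁`, `R₂ ≤ dim N₂` and `R₁ + R₂ ≤ dim (N₁ + N₂)`. -/
theorem select_independent_vectors_iff {F V : Type*} [Field F]
    [AddCommGroup V] [Module F V] [FiniteDimensional F V]
    (N₁ N₂ : Submodule F V) (R₁ R₂ : ℕ) :
    (∃ (f : Fin R₁ → V) (g : Fin R₂ → V),
        (∀ i, f i ∈ N₁) ∧ (∀ j, g j ∈ N₂) ∧
        LinearIndependent F (Sum.elim f g)) ↔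
      (R₁ ≤ Module.finrank F ↥N₁ ∧ R₂ ≤ Module.finrank F ↥N₂ ∧
        R₁ + R₂ ≤ Module.finrank F ↥(N₁ ⊔ N₂)) := by
  classical
  constructor
  · rintro ⟨f, g, hf, hg, hli⟩
    refine ⟨?_, ?_, ?_⟩
    · have h1 : LinearIndependent F (fun i => (⟨f i, hf i⟩ : N₁)) :=
        LinearIndependent.of_comp N₁.subtype (hli.comp Sum.inl Sum.inl_injective)
      simpa using h1.fintype_card_le_finrank
    · have h2 : LinearIndependent F (fun j => (⟨g j, hg j⟩ : N₂)) :=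
        LinearIndependent.of_comp N₂.subtype (hli.comp Sum.inr Sum.inr_injective)
      simpa using h2.fintype_card_le_finrank
    · have hmem : ∀ x, Sum.elim f g x ∈ N₁ ⊔ N₂ := by
        rintro (i | j)
        · exact mem_sup_left (hf i)
        · exact mem_sup_right (hg j)
      have h3 : LinearIndependent F (fun x => (⟨Sum.elim f g x, hmem x⟩ : ↥(N₁ ⊔ N₂))) :=
        LinearIndependent.of_comp (N₁ ⊔ N₂).subtype hli
      simpa using h3.fintype_card_le_finrank
  · rintro ⟨h₁, h₂, h₃⟩
    obtain ⟨b₀, hb₀t, hb₀span, hb₀li⟩ :=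
      exists_linearIndependent F ((N₁ ⊓ N₂ : Submodule F V) : Set V)
    have hb₀span' : span F b₀ = N₁ ⊓ N₂ := by rw [hb₀span, Submodule.span_eq]
    have hb₀N₁ : b₀ ⊆ (N₁ : Set V) := fun x hx => (hb₀t hx).1
    have hb₀N₂ : b₀ ⊆ (N₂ : Set V) := fun x hx => (hb₀t hx).2
    replace hb₀li : LinearIndepOn F id b₀ := hb₀li
    set b₁ := hb₀li.extend hb₀N₁ with hb₁def
    have hb₁N₁ : b₁ ⊆ (N₁ : Set V) := hb₀li.extend_subset hb₀N₁
    have hb₀b₁ : b₀ ⊆ b₁ := hb₀li.subset_extend hb₀N₁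
    have hb₁li : LinearIndependent F ((↑) : b₁ → V) :=
      hb₀li.linearIndepOn_extend hb₀N₁
    have hb₁span : span F b₁ = N₁ := by
      refine le_antisymm (span_le.2 hb₁N₁) ?_
      exact fun x hx => hb₀li.subset_span_extend hb₀N₁ hx
    set b₂ := hb₀li.extend hb₀N₂ with hb₂def
    have hb₂N₂ : b₂ ⊆ (N₂ : Set V) := hb₀li.extend_subset hb₀N₂
    have hb₀b₂ : b₀ ⊆ b₂ := hb₀li.subset_extend hb₀N₂
    have hb₂li : LinearIndependent F ((↑) : b₂ → V) :=
      hb₀li.linearIndepOn_extend hb₀N₂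
    have hb₂span : span F b₂ = N₂ := by
      refine le_antisymm (span_le.2 hb₂N₂) ?_
      exact fun x hx => hb₀li.subset_span_extend hb₀N₂ hx
    -- intersection of the two bases is b₀
    have hinter : b₁ ∩ b₂ = b₀ := by
      refine Subset.antisymm ?_ (subset_inter hb₀b₁ hb₀b₂)
      rintro x ⟨hx1, hx2⟩
      by_contra hx0
      have hxmem : x ∈ span F b₀ := by
        rw [hb₀span']; exact ⟨hb₁N₁ hx1, hb₂N₂ hx2⟩
      have hli' : LinearIndependent F ((↑) : ↥(insert x b₀) → V) :=
        LinearIndepOn.mono (v := id) hb₁li (insert_subset hx1 hb₀b₁)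
      exact ((linearIndepOn_id_insert hx0).1 hli').2 hxmem
    -- the union is linearly independent
    have hdisj : Disjoint (span F b₁) (span F (b₂ \ b₀)) := by
      rw [disjoint_def]
      intro w hw1 hw2
      have hwN₂ : w ∈ N₂ := by
        have : span F (b₂ \ b₀) ≤ N₂ := span_le.2 fun y hy => hb₂N₂ hy.1
        exact this hw2
      have hw0 : w ∈ span F b₀ := by
        rw [hb₀span']
        exact ⟨hb₁span ▸ hw1, hwN₂⟩
      have hd : Disjoint (span F b₀) (span F (b₂ \ b₀)) :=
        aux_disjoint_span hb₂li hb₀b₂ diff_subset disjoint_sdiff_right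
      exact disjoint_def.1 hd w hw0 hw2
    have hunioneq : b₁ ∪ b₂ = b₁ ∪ (b₂ \ b₀) := by
      ext x
      constructor
      · rintro (hx | hx)
        · exact Or.inl hx
        · by_cases hx0 : x ∈ b₀
          · exact Or.inl (hb₀b₁ hx0)
          · exact Or.inr ⟨hx, hx0⟩
      · rintro (hx | hx)
        · exact Or.inl hx
        · exact Or.inr hx.1
    have hunionli : LinearIndependent F ((↑) : ↥(b₁ ∪ b₂) → V) := by
      rw [hunioneq]
      exact LinearIndepOn.union (v := id) hb₁li (LinearIndepOn.mono (v := id) hb₂li diff_subset) (by simpa only [image_id] using hdisj)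
    -- pass to finsets
    have hfin₁ : b₁.Finite := hb₁li.setFinite
    have hfin₂ : b₂.Finite := hb₂li.setFinite
    have hfin₀ : b₀.Finite := hfin₁.subset hb₀b₁
    set B₁ := hfin₁.toFinset with hB₁def
    set B₂ := hfin₂.toFinset with hB₂def
    set B₀ := hfin₀.toFinset with hB₀def
    have hB₁coe : (B₁ : Set V) = b₁ := hfin₁.coe_toFinset
    have hB₂coe : (B₂ : Set V) = b₂ := hfin₂.coe_toFinset
    have hB₀coe : (B₀ : Set V) = b₀ := hfin₀.coe_toFinset
    -- cardinalities
    have hc₁ : finrank F N₁ = B₁.card := by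
      rw [← hb₁span, ← hB₁coe]
      exact finrank_span_finset_eq_card (LinearIndepOn.mono (v := id) hb₁li hB₁coe.subset)
    have hc₂ : finrank F N₂ = B₂.card := by
      rw [← hb₂span, ← hB₂coe]
      exact finrank_span_finset_eq_card (LinearIndepOn.mono (v := id) hb₂li hB₂coe.subset)
    have hcU : finrank F ↥(N₁ ⊔ N₂) = (B₁ ∪ B₂).card := by
      have hcoe : ((B₁ ∪ B₂ : Finset V) : Set V) = b₁ ∪ b₂ := by
        rw [Finset.coe_union, hB₁coe, hB₂coe]
      have hspan : span F ((B₁ ∪ B₂ : Finset V) : Set V) = N₁ ⊔ N₂ := by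
        rw [hcoe, span_union, hb₁span, hb₂span]
      rw [← hspan]
      exact finrank_span_finset_eq_card (LinearIndepOn.mono (v := id) hunionli hcoe.subset)
    have hBinter : B₁ ∩ B₂ = B₀ := by
      ext x
      simp only [Finset.mem_inter, hB₁def, hB₂def, hB₀def, Set.Finite.mem_toFinset]
      rw [← hinter]; exact Iff.rfl
    have hB₀B₁ : B₀ ⊆ B₁ := by
      intro x hx
      simp only [hB₁def, hB₀def, Set.Finite.mem_toFinset] at *
      exact hb₀b₁ hx
    have hB₀B₂ : B₀ ⊆ B₂ := by
      intro x hx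
      simp only [hB₂def, hB₀def, Set.Finite.mem_toFinset] at *
      exact hb₀b₂ hx
    have hcardsum : (B₁ ∪ B₂).card + B₀.card = B₁.card + B₂.card := by
      rw [← hBinter]; exact Finset.card_union_add_card_inter B₁ B₂
    rw [hc₁] at h₁; rw [hc₂] at h₂; rw [hcU] at h₃
    have hB₀cardle : B₀.card ≤ B₂.card := Finset.card_le_card hB₀B₂
    have hsdcard : (B₂ \ B₀).card = B₂.card - B₀.card := Finset.card_sdiff_of_subset hB₀B₂
    -- select s₂
    set m := min R₂ (B₂.card - B₀.card) with hmdef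
    have hm1 : m ≤ R₂ := min_le_left _ _
    have hm2 : m ≤ B₂.card - B₀.card := min_le_right _ _
    have hm3 : m = R₂ ∨ m = B₂.card - B₀.card := min_choice _ _
    obtain ⟨T, hT, hTcard⟩ := Finset.exists_subset_card_eq (s := B₂ \ B₀) (n := m)
      (by omega)
    obtain ⟨T', hT', hT'card⟩ := Finset.exists_subset_card_eq (s := B₀) (n := R₂ - m)
      (by omega)
    have hTT'disj : Disjoint T T' := by
      refine Finset.disjoint_left.2 fun x hxT hxT' => ?_
      exact (Finset.mem_sdiff.1 (hT hxT)).2 (hT' hxT')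
    set s₂ := T ∪ T' with hs₂def
    have hs₂card : s₂.card = R₂ := by
      rw [Finset.card_union_of_disjoint hTT'disj, hTcard, hT'card]; omega
    have hs₂B₂ : s₂ ⊆ B₂ := by
      refine Finset.union_subset (hT.trans ?_) (hT'.trans hB₀B₂)
      exact Finset.sdiff_subset
    -- select s₁
    have hB₁s₂ : B₁ ∩ s₂ = T' := by
      ext x
      simp only [hs₂def, Finset.mem_inter, Finset.mem_union]
      constructor
      · rintro ⟨hx1, hx2 | hx2⟩
        · exfalso
          have := Finset.mem_sdiff.1 (hT hx2)
          exact this.2 (hBinter ▸ Finset.mem_inter.2 ⟨hx1, this.1⟩)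
        · exact hx2
      · intro hx
        exact ⟨hB₀B₁ (hT' hx), Or.inr hx⟩
    have hB₁sd : (B₁ \ s₂).card = B₁.card - T'.card := by
      have := Finset.card_inter_add_card_sdiff B₁ s₂
      rw [hB₁s₂] at this
      omega
    obtain ⟨s₁, hs₁, hs₁card⟩ := Finset.exists_subset_card_eq (s := B₁ \ s₂) (n := R₁)
      (by rw [hB₁sd, hT'card]; omega)
    have hs₁B₁ : s₁ ⊆ B₁ := hs₁.trans Finset.sdiff_subset
    have hdisj12 : Disjoint s₁ s₂ :=
      Finset.disjoint_left.2 fun x hx1 hx2 => (Finset.mem_sdiff.1 (hs₁ hx1)).2 hx2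
    -- linear independence of the selection
    have hsub : ((s₁ : Set V) ∪ (s₂ : Set V)) ⊆ b₁ ∪ b₂ := by
      rintro x (hx | hx)
      · exact Or.inl (hB₁coe ▸ Finset.coe_subset.2 hs₁B₁ hx)
      · exact Or.inr (hB₂coe ▸ Finset.coe_subset.2 hs₂B₂ hx)
    have hsel : LinearIndependent F ((↑) : ↥((s₁ : Set V) ∪ (s₂ : Set V)) → V) :=
      LinearIndepOn.mono (v := id) hunionli hsub
    -- build the functions
    have e₁ : Fin R₁ ≃ {x // x ∈ s₁} := (Finset.equivFinOfCardEq hs₁card).symm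
    have e₂ : Fin R₂ ≃ {x // x ∈ s₂} := (Finset.equivFinOfCardEq hs₂card).symm
    refine ⟨fun i => ↑(e₁ i), fun j => ↑(e₂ j), ?_, ?_, ?_⟩
    · intro i
      have : (↑(e₁ i) : V) ∈ b₁ := hB₁coe ▸ Finset.coe_subset.2 hs₁B₁ (e₁ i).2
      exact hb₁N₁ this
    · intro j
      have : (↑(e₂ j) : V) ∈ b₂ := hB₂coe ▸ Finset.coe_subset.2 hs₂B₂ (e₂ j).2
      exact hb₂N₂ this
    · set h : Fin R₁ ⊕ Fin R₂ → ↥((s₁ : Set V) ∪ (s₂ : Set V)) :=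
        Sum.elim (fun i => ⟨↑(e₁ i), Or.inl (e₁ i).2⟩)
                 (fun j => ⟨↑(e₂ j), Or.inr (e₂ j).2⟩) with hhdef
      have hinj : Function.Injective h := by
        rintro (i | i) (j | j) hij <;>
          simp only [hhdef, Sum.elim_inl, Sum.elim_inr, Subtype.mk.injEq] at hij
        · exact congrArg Sum.inl (e₁.injective (Subtype.ext (by simpa using congrArg Subtype.val hij)))
        · exact absurd ((e₂ j).2) (Finset.disjoint_left.1 hdisj12 ((congrArg Subtype.val hij) ▸ (e₁ i).2))
        · exact absurd ((e₂ i).2) (Finset.disjoint_left.1 hdisj12 ((congrArg Subtype.val hij) ▸ (e₁ j).2))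
        · exact congrArg Sum.inr (e₂.injective (Subtype.ext (by simpa using congrArg Subtype.val hij)))
      have heq : Sum.elim (fun i => (↑(e₁ i) : V)) (fun j => (↑(e₂ j) : V)) =
          ((↑) : ↥((s₁ : Set V) ∪ (s₂ : Set V)) → V) ∘ h := by
        funext x; cases x <;> rfl
      rw [heq]
      exact hsel.comp h hinj
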